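/- Let K be an H-operator-valued kernel on X which is Γ-invariant and partially positive semidefinite with respect to the partition {X_s}_{s∈S}. For s ∈ S let K^s := K|_{X_s × X_s} (a positive semidefinite kernel on X_s), let ℛ_{K^s} be its reproducing kernel Hilbert space, and let D_s := span{K^s_x h : x ∈ X_s, h ∈ H_x} ⊆ ℛ_{K^s}. Then for each α ∈ Γ the formula (Φ(α)f)(x) := f(α*·x) (x ∈ X_{c(α)}) defines a linear map Φ(α) : D_{d(α)} → D_{c(α)}, and the family {Φ(α)}_{α∈Γ} is the unique one satisfying Φ(α) K^{d(α)}_x h = K^{c(α)}_{α·x} h for all α ∈ Γ, x ∈ X_{d(α)}, h ∈ H_x. Moreover, Φ(αβ)|_{D_{d(β)}} = Φ(α)Φ(β)|_{D_{d(β)}} for every composable pair (α,β), and ⟨Φ(α)f, g⟩_{ℛ_{K^{c(α)}}} = ⟨f, Φ(α*)g⟩_{ℛ_{K^{d(α)}}} for all f ∈ D_{d(α)} and g ∈ D_{c(α)}. -/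
import Mathlib


open scoped InnerProductSpace

noncomputable section

universe u uΓ uS v vO w

/-- A `*`-semigroupoid: partially defined multiplication (the product `mul α β`
is subject to the axioms only when `d α = c β`) together with an involution. -/
structure StarSgd (Γ : Type uΓ) (S : Type uS) where
  d : Γ → S
  c : Γ → S
  mul : Γ → Γ → Γ
  star : Γ → Γ
  d_mul : ∀ {α β : Γ}, d α = c β → d (mul α β) = d β
  c_mul : ∀ {α β : Γ}, d α = c β → c (mul α β) = c α
  mul_assoc : ∀ {α β γ : Γ}, d α = c β → d β = c γ →
    mul α (mul β γ) = mul (mul α β) γ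
  d_star : ∀ α, d (star α) = c α
  c_star : ∀ α, c (star α) = d α
  star_star : ∀ α, star (star α) = α
  star_mul : ∀ {α β : Γ}, d α = c β → star (mul α β) = mul (star β) (star α)

/-- A left action of a semigroupoid on a set `X`, with surjective anchor `a`;
`act α x` is subject to the axioms only when `d α = a x`. -/
structure SgdAction (Γ : Type uΓ) (S : Type uS) (X : Type v) (G : StarSgd Γ S) where
  a : X → S
  a_surj : Function.Surjective a
  act : Γ → X → X
  a_act : ∀ {α : Γ} {x : X}, G.d α = a x → a (act α x) = G.c α
  act_mul : ∀ {α β : Γ} {x : X}, G.d β = a x → G.d α = G.c β →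
    act (G.mul α β) x = act α (act β x)

variable {𝕜 : Type u} [RCLike 𝕜] {Γ : Type uΓ} {S : Type uS} {X : Type v}
  {O : Type vO} {E : O → Type w}
  [∀ o, NormedAddCommGroup (E o)] [∀ o, InnerProductSpace 𝕜 (E o)]
  [∀ o, CompleteSpace (E o)]

/-- Transport along an equality of indices: since the Hilbert bundle over `X`
is given as a pullback `x ↦ E (p x)`, equal indices give literally the same
Hilbert space, and the transport is a linear isometry. -/
def castE (𝕜 : Type u) [RCLike 𝕜] {O : Type vO} (E : O → Type w)
    [∀ o, NormedAddCommGroup (E o)] [∀ o, InnerProductSpace 𝕜 (E o)]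
    {o o' : O} (h : o = o') : E o ≃ₗᵢ[𝕜] E o' := by
  subst h; exact LinearIsometryEquiv.refl 𝕜 (E o)

variable {G : StarSgd Γ S} (A : SgdAction Γ S X G) (p : X → O)

/-- `K` is partially Hermitian with respect to the partition of `X` into the
fibres of the anchor map. -/
def PartHermitian (K : ∀ y x : X, E (p x) →L[𝕜] E (p y)) : Prop :=
  ∀ x y : X, A.a x = A.a y → ContinuousLinearMap.adjoint (K x y) = K y x

/-- `K` is partially positive semidefinite with respect to the partition of
`X` into the fibres of the anchor map. -/
def PartPSD (K : ∀ y x : X, E (p x) →L[𝕜] E (p y)) : Prop :=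
  PartHermitian A p K ∧
  ∀ (s : S) (n : ℕ) (x : Fin n → X), (∀ i, A.a (x i) = s) →
    ∀ h : ∀ i, E (p (x i)),
      0 ≤ RCLike.re (∑ i, ∑ j, ⟪K (x j) (x i) (h i), h j⟫_𝕜)

variable (hp : ∀ {α : Γ} {x : X}, G.d α = A.a x → p (A.act α x) = p x)

/-- `K` is `Γ`-invariant: `K(α·x, y) = K(x, α*·y)`, expressed using the
transport isometries coming from the constancy of the bundle on orbits. -/
def GammaInvariant (K : ∀ y x : X, E (p x) →L[𝕜] E (p y)) : Prop :=
  ∀ (α : Γ) (x y : X) (hx : G.d α = A.a x) (hy : G.c α = A.a y) (k : E (p y)),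
    castE 𝕜 E (hp hx) (K (A.act α x) y k) =
      K x (A.act (G.star α) y)
        ((castE 𝕜 E (hp ((G.d_star α).trans hy))).symm k)

/-- `K` is of bounded shift type: for every `α` there is `M_α ≥ 0` dominating
the shifted quadratic forms by the original ones (stated via finite families of
points in the fibre `X_{d(α)}`). -/
def BoundedShiftType (K : ∀ y x : X, E (p x) →L[𝕜] E (p y)) : Prop :=
  ∀ α : Γ, ∃ M : ℝ, 0 ≤ M ∧
    ∀ (n : ℕ) (z : Fin n → X) (hz : ∀ i, G.d α = A.a (z i))
      (g : ∀ i, E (p (z i))),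
      RCLike.re (∑ i, ∑ j, ⟪K (A.act α (z j)) (A.act α (z i))
          ((castE 𝕜 E (hp (hz i))).symm (g i)),
          (castE 𝕜 E (hp (hz j))).symm (g j)⟫_𝕜) ≤
        M * RCLike.re (∑ i, ∑ j, ⟪K (z j) (z i) (g i), g j⟫_𝕜)

universe w'

/-- A reproducing kernel Hilbert space of sections over the fibre
`X_s = a⁻¹({s})`, with kernel the restriction of `K` to `X_s × X_s`:
a Hilbert space embedded injectively and linearly into the sections on `X_s`,
containing the kernel sections `K_x h` and with the reproducing property. -/
structure RKHSOn (𝕜 : Type u) [RCLike 𝕜] {Γ : Type uΓ} {S : Type uS}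
    {X : Type v} {O : Type vO} (E : O → Type w)
    [∀ o, NormedAddCommGroup (E o)] [∀ o, InnerProductSpace 𝕜 (E o)]
    [∀ o, CompleteSpace (E o)]
    {G : StarSgd Γ S} (A : SgdAction Γ S X G) (p : X → O)
    (K : ∀ y x : X, E (p x) →L[𝕜] E (p y)) (s : S) :
    Type (max u v w (w' + 1)) where
  carrier : Type w'
  [ng : NormedAddCommGroup carrier]
  [ip : InnerProductSpace 𝕜 carrier]
  [cs : CompleteSpace carrier]
  emb : carrier →ₗ[𝕜] ∀ x : {x : X // A.a x = s}, E (p x.val)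
  emb_inj : Function.Injective emb
  Kx : ∀ x : {x : X // A.a x = s}, E (p x.val) → carrier
  emb_Kx : ∀ (x : {x : X // A.a x = s}) (h : E (p x.val))
    (y : {x : X // A.a x = s}), emb (Kx x h) y = K y.val x.val h
  repro : ∀ (f : carrier) (x : {x : X // A.a x = s}) (h : E (p x.val)),
    ⟪emb f x, h⟫_𝕜 = ⟪f, Kx x h⟫_𝕜

attribute [instance] RKHSOn.ng RKHSOn.ip RKHSOn.cs

variable (K : ∀ y x : X, E (p x) →L[𝕜] E (p y))

/-- The dense subspaces `D_s := span{K^s_x h}` of the reproducing kernel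
Hilbert spaces. -/
def Dspan (R : ∀ s : S, RKHSOn.{u, uΓ, uS, v, vO, w, w'} 𝕜 E A p K s) (s : S) :
    Submodule 𝕜 (R s).carrier :=
  Submodule.span 𝕜 (⋃ x : {x : X // A.a x = s}, Set.range ((R s).Kx x))

/-- Transport between the subspaces `D_s` along an equality of indices. -/
def castD {R : ∀ s : S, RKHSOn.{u, uΓ, uS, v, vO, w, w'} 𝕜 E A p K s}
    {s t : S} (h : s = t) : ↥(Dspan A p K R s) ≃ₗ[𝕜] ↥(Dspan A p K R t) := by
  subst h; exact LinearEquiv.refl 𝕜 _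

section Aux

variable {A} {p} {K}

lemma aux_castE_castE {o1 o2 o3 : O} (h : o1 = o2) (h' : o2 = o3) (k : E o1) :
    castE 𝕜 E h' (castE 𝕜 E h k) = castE 𝕜 E (h.trans h') k := by
  subst h; subst h'; rfl

lemma aux_inner_castE {o o' : O} (h : o = o') (k : E o) (m : E o') :
    ⟪castE 𝕜 E h k, m⟫_𝕜 = ⟪k, (castE 𝕜 E h).symm m⟫_𝕜 := by
  subst h; rfl

lemma aux_actK_congr (y : X) {γ γ' : Γ} (hγ : γ = γ') {x : X}
    (hγx : G.d γ = A.a x) (hγ'x : G.d γ' = A.a x) (h : E (p x)) :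
    K y (A.act γ x) ((castE 𝕜 E (hp hγx)).symm h)
      = K y (A.act γ' x) ((castE 𝕜 E (hp hγ'x)).symm h) := by
  subst hγ; rfl

lemma aux_key (hKinv : GammaInvariant A p hp K) (α : Γ) (x y : X)
    (hx : G.d α = A.a x) (hy : G.c α = A.a y) (h : E (p x)) :
    K y (A.act α x) ((castE 𝕜 E (hp hx)).symm h) =
      castE 𝕜 E (hp ((G.d_star α).trans hy)) (K (A.act (G.star α) y) x h) := by
  have h1 : G.d (G.star α) = A.a y := (G.d_star α).trans hy
  have h2 : G.c (G.star α) = A.a x := (G.c_star α).trans hx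
  have H := hKinv (G.star α) y x h1 h2 h
  rw [H]
  exact aux_actK_congr hp y (G.star_star α).symm hx
    ((G.d_star (G.star α)).trans h2) h

variable {R : ∀ s : S, RKHSOn.{u, uΓ, uS, v, vO, w, w'} 𝕜 E A p K s}

lemma aux_emb_castD {s t : S} (h : s = t) (f : ↥(Dspan A p K R s)) (x : X)
    (hx : A.a x = t) :
    (R t).emb ↑(castD A p K h f) ⟨x, hx⟩ = (R s).emb ↑f ⟨x, hx.trans h.symm⟩ := by
  subst h; rfl

lemma aux_castE_emb_congr {s : S} (f : (R s).carrier) {z z' : X} (hzz : z = z')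
    {o : O} (h1 : A.a z = s) (h2 : A.a z' = s) (e1 : p z = o) (e2 : p z' = o) :
    castE 𝕜 E e1 ((R s).emb f ⟨z, h1⟩) = castE 𝕜 E e2 ((R s).emb f ⟨z', h2⟩) := by
  subst hzz; rfl

lemma aux_castD_Kx {s t : S} (h : s = t) (x : X) (hx : A.a x = s) (k : E (p x))
    (mem : (R s).Kx ⟨x, hx⟩ k ∈ Dspan A p K R s)
    (mem' : (R t).Kx ⟨x, hx.trans h⟩ k ∈ Dspan A p K R t) :
    castD A p K h (⟨(R s).Kx ⟨x, hx⟩ k, mem⟩ : ↥(Dspan A p K R s)) =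
      ⟨(R t).Kx ⟨x, hx.trans h⟩ k, mem'⟩ := by
  subst h; rfl

/-- The defining formula for `Φ α`. -/
def Fml (R : ∀ s : S, RKHSOn.{u, uΓ, uS, v, vO, w, w'} 𝕜 E A p K s) (α : Γ)
    (f : (R (G.d α)).carrier) (g : (R (G.c α)).carrier) : Prop :=
  ∀ (x : X) (hx : G.c α = A.a x),
    (R (G.c α)).emb g ⟨x, hx.symm⟩ =
      castE 𝕜 E (hp ((G.d_star α).trans hx))
        ((R (G.d α)).emb f ⟨A.act (G.star α) x,
          (A.a_act ((G.d_star α).trans hx)).trans (G.c_star α)⟩)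

lemma Fml_unique {α : Γ} {f : (R (G.d α)).carrier} {g g' : (R (G.c α)).carrier}
    (h1 : Fml hp R α f g) (h2 : Fml hp R α f g') : g = g' := by
  apply (R (G.c α)).emb_inj
  funext y
  obtain ⟨x, hx⟩ := y
  exact (h1 x hx.symm).trans (h2 x hx.symm).symm

lemma Fml_zero {α : Γ} : Fml hp R α 0 0 := by
  intro x hx; simp [map_zero]

lemma Fml_add {α : Γ} {f f' : (R (G.d α)).carrier} {g g' : (R (G.c α)).carrier}
    (h1 : Fml hp R α f g) (h2 : Fml hp R α f' g') : Fml hp R α (f + f') (g + g') := by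
  intro x hx
  simp only [map_add, Pi.add_apply, h1 x hx, h2 x hx]

lemma Fml_smul {α : Γ} (c : 𝕜) {f : (R (G.d α)).carrier} {g : (R (G.c α)).carrier}
    (h1 : Fml hp R α f g) : Fml hp R α (c • f) (c • g) := by
  intro x hx
  simp only [map_smul, Pi.smul_apply, h1 x hx]

lemma Fml_gen (hKinv : GammaInvariant A p hp K) (α : Γ) (x : X)
    (hx : G.d α = A.a x) (k : E (p x)) :
    Fml hp R α ((R (G.d α)).Kx ⟨x, hx.symm⟩ k)
      ((R (G.c α)).Kx ⟨A.act α x, A.a_act hx⟩ ((castE 𝕜 E (hp hx)).symm k)) := by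
  intro y hy
  rw [(R (G.c α)).emb_Kx, (R (G.d α)).emb_Kx]
  exact aux_key hp hKinv α x y hx hy k

lemma Fml_exists (hKinv : GammaInvariant A p hp K) (α : Γ)
    (f : ↥(Dspan A p K R (G.d α))) :
    ∃ g : ↥(Dspan A p K R (G.c α)), Fml hp R α ↑f ↑g := by
  obtain ⟨v, hv⟩ := f
  refine Submodule.span_induction
    (p := fun v _ => ∃ g : ↥(Dspan A p K R (G.c α)), Fml hp R α v ↑g)
    ?_ ?_ ?_ ?_ hv
  · intro v hvm
    rw [Set.mem_iUnion] at hvm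
    obtain ⟨x', hx'⟩ := hvm
    obtain ⟨k, rfl⟩ := hx'
    refine ⟨⟨(R (G.c α)).Kx ⟨A.act α x'.1, A.a_act x'.2.symm⟩
      ((castE 𝕜 E (hp x'.2.symm)).symm k),
      Submodule.subset_span (Set.mem_iUnion.mpr ⟨_, Set.mem_range_self _⟩)⟩, ?_⟩
    exact Fml_gen hp hKinv α x'.1 x'.2.symm k
  · exact ⟨0, Fml_zero hp⟩
  · rintro u v hu hv ⟨gu, hgu⟩ ⟨gv, hgv⟩
    exact ⟨gu + gv, Fml_add hp hgu hgv⟩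
  · rintro c u hu ⟨gu, hgu⟩
    exact ⟨c • gu, Fml_smul hp c hgu⟩

end Aux

/-- for a `Γ`-invariant partially positive semidefinite kernel
`K`, on the bundle of reproducing kernel Hilbert spaces `{ℛ_{K^s}}` the formula
`(Φ(α)f)(x) = f(α*·x)` defines the unique family of linear maps
`Φ(α) : D_{d(α)} → D_{c(α)}` satisfying `Φ(α) K^{d(α)}_x h = K^{c(α)}_{α·x} h`;
moreover this family is multiplicative on composable pairs and satisfies the
adjoint relation `⟨Φ(α)f, g⟩ = ⟨f, Φ(α*)g⟩`. -/
theorem gen_star_representation_on_rkhs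
    (hK : PartPSD A p K) (hKinv : GammaInvariant A p hp K)
    (R : ∀ s : S, RKHSOn.{u, uΓ, uS, v, vO, w, w'} 𝕜 E A p K s) :
    ∃ Φ : ∀ α : Γ, ↥(Dspan A p K R (G.d α)) →ₗ[𝕜] ↥(Dspan A p K R (G.c α)),
      (∀ (α : Γ) (f : ↥(Dspan A p K R (G.d α))) (x : X) (hx : G.c α = A.a x),
        (R (G.c α)).emb ↑(Φ α f) ⟨x, hx.symm⟩ =
          castE 𝕜 E (hp ((G.d_star α).trans hx))
            ((R (G.d α)).emb ↑f ⟨A.act (G.star α) x,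
              (A.a_act ((G.d_star α).trans hx)).trans (G.c_star α)⟩)) ∧
      (∀ (α : Γ) (x : X) (hx : G.d α = A.a x) (h : E (p x)),
        Φ α ⟨(R (G.d α)).Kx ⟨x, hx.symm⟩ h,
            Submodule.subset_span
              (Set.mem_iUnion.mpr ⟨⟨x, hx.symm⟩, Set.mem_range_self h⟩)⟩ =
          ⟨(R (G.c α)).Kx ⟨A.act α x, A.a_act hx⟩ ((castE 𝕜 E (hp hx)).symm h),
            Submodule.subset_span
              (Set.mem_iUnion.mpr ⟨⟨A.act α x, A.a_act hx⟩,
                Set.mem_range_self _⟩)⟩) ∧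
      (∀ Φ' : ∀ α : Γ,
          ↥(Dspan A p K R (G.d α)) →ₗ[𝕜] ↥(Dspan A p K R (G.c α)),
        (∀ (α : Γ) (x : X) (hx : G.d α = A.a x) (h : E (p x)),
          Φ' α ⟨(R (G.d α)).Kx ⟨x, hx.symm⟩ h,
              Submodule.subset_span
                (Set.mem_iUnion.mpr ⟨⟨x, hx.symm⟩, Set.mem_range_self h⟩)⟩ =
            ⟨(R (G.c α)).Kx ⟨A.act α x, A.a_act hx⟩
                ((castE 𝕜 E (hp hx)).symm h),
              Submodule.subset_span
                (Set.mem_iUnion.mpr ⟨⟨A.act α x, A.a_act hx⟩,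
                  Set.mem_range_self _⟩)⟩) → Φ' = Φ) ∧
      (∀ (α β : Γ) (hc : G.d α = G.c β) (f : ↥(Dspan A p K R (G.d β))),
        Φ (G.mul α β) (castD A p K (G.d_mul hc).symm f) =
          castD A p K (G.c_mul hc).symm (Φ α (castD A p K hc.symm (Φ β f)))) ∧
      (∀ (α : Γ) (f : ↥(Dspan A p K R (G.d α)))
          (g : ↥(Dspan A p K R (G.c α))),
        ⟪((Φ α f) : (R (G.c α)).carrier), (g : (R (G.c α)).carrier)⟫_𝕜 =
          ⟪(f : (R (G.d α)).carrier),
            ((castD A p K (G.c_star α)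
              (Φ (G.star α) (castD A p K (G.d_star α).symm g))) :
                (R (G.d α)).carrier)⟫_𝕜) := by
  classical
  choose φ hφ using fun (α : Γ) (f : ↥(Dspan A p K R (G.d α))) =>
    Fml_exists hp hKinv α f
  let Φ : ∀ α : Γ, ↥(Dspan A p K R (G.d α)) →ₗ[𝕜] ↥(Dspan A p K R (G.c α)) :=
    fun α =>
      { toFun := φ α
        map_add' := fun f f' => Subtype.coe_injective
          (Fml_unique hp (hφ α (f + f'))
            (Fml_add hp (hφ α f) (hφ α f')))
        map_smul' := fun c f => Subtype.coe_injective
          (Fml_unique hp (hφ α (c • f))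
            (Fml_smul hp c (hφ α f))) }
  have P1 : ∀ (α : Γ) (f : ↥(Dspan A p K R (G.d α))) (x : X)
      (hx : G.c α = A.a x),
      (R (G.c α)).emb ↑(Φ α f) ⟨x, hx.symm⟩ =
        castE 𝕜 E (hp ((G.d_star α).trans hx))
          ((R (G.d α)).emb ↑f ⟨A.act (G.star α) x,
            (A.a_act ((G.d_star α).trans hx)).trans (G.c_star α)⟩) :=
    fun α f x hx => hφ α f x hx
  have P2 : ∀ (α : Γ) (x : X) (hx : G.d α = A.a x) (h : E (p x)),
      Φ α ⟨(R (G.d α)).Kx ⟨x, hx.symm⟩ h,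
          Submodule.subset_span
            (Set.mem_iUnion.mpr ⟨⟨x, hx.symm⟩, Set.mem_range_self h⟩)⟩ =
        ⟨(R (G.c α)).Kx ⟨A.act α x, A.a_act hx⟩ ((castE 𝕜 E (hp hx)).symm h),
          Submodule.subset_span
            (Set.mem_iUnion.mpr ⟨⟨A.act α x, A.a_act hx⟩,
              Set.mem_range_self _⟩)⟩ :=
    fun α x hx h => Subtype.coe_injective
      (Fml_unique hp (hφ α _) (Fml_gen hp hKinv α x hx h))
  refine ⟨Φ, P1, P2, ?_, ?_, ?_⟩
  · -- uniqueness
    intro Φ' hΦ'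
    funext α
    apply LinearMap.ext
    rintro ⟨v, hv⟩
    refine Submodule.span_induction
      (p := fun v hv => Φ' α ⟨v, hv⟩ = Φ α ⟨v, hv⟩) ?_ ?_ ?_ ?_ hv
    · intro v hvm
      obtain ⟨x', hx'⟩ := Set.mem_iUnion.mp hvm
      obtain ⟨k, rfl⟩ := hx'
      exact (hΦ' α x'.1 x'.2.symm k).trans (P2 α x'.1 x'.2.symm k).symm
    · show Φ' α 0 = Φ α 0
      rw [map_zero, map_zero]
    · intro u v hu hv ihu ihv
      show Φ' α (⟨u, hu⟩ + ⟨v, hv⟩) = Φ α (⟨u, hu⟩ + ⟨v, hv⟩)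
      rw [map_add, map_add, ihu, ihv]
    · intro c u hu ihu
      show Φ' α (c • ⟨u, hu⟩) = Φ α (c • ⟨u, hu⟩)
      rw [map_smul, map_smul, ihu]
  · -- multiplicativity
    intro α β hc f
    apply Subtype.coe_injective
    apply (R (G.c (G.mul α β))).emb_inj
    funext y
    obtain ⟨x, hx⟩ := y
    have hdsa : G.d (G.star α) = A.a x :=
      (G.d_star α).trans ((G.c_mul hc).symm.trans hx.symm)
    have hcomp : G.d (G.star β) = G.c (G.star α) :=
      (G.d_star β).trans (hc.symm.trans (G.c_star α).symm)
    have hzz : A.act (G.star (G.mul α β)) x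
        = A.act (G.star β) (A.act (G.star α) x) :=
      (congrArg (fun γ => A.act γ x) (G.star_mul hc)).trans
        (A.act_mul hdsa hcomp)
    have h6 : G.d (G.star β) = A.a (A.act (G.star α) x) :=
      hcomp.trans (A.a_act hdsa).symm
    have h2' : A.a (A.act (G.star β) (A.act (G.star α) x)) = G.d β :=
      (A.a_act h6).trans (G.c_star β)
    have e2' : p (A.act (G.star β) (A.act (G.star α) x)) = p x :=
      (hp h6).trans (hp hdsa)
    have hcax : G.c α = A.a x := (G.c_mul hc).symm.trans hx.symm
    have hcb : G.c β = A.a (A.act (G.star α) x) := (G.d_star β).symm.trans h6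
    refine (P1 (G.mul α β) (castD A p K (G.d_mul hc).symm f) x hx.symm).trans ?_
    rw [aux_emb_castD (G.d_mul hc).symm f]
    refine (aux_castE_emb_congr (R := R) (s := G.d β) ((f : ↥(Dspan A p K R (G.d β))) : (R (G.d β)).carrier) hzz _ h2' _ e2').trans ?_
    refine Eq.symm ?_
    refine (aux_emb_castD (G.c_mul hc).symm
      (Φ α (castD A p K hc.symm (Φ β f))) x hx).trans ?_
    refine (P1 α (castD A p K hc.symm (Φ β f)) x hcax).trans ?_
    rw [aux_emb_castD hc.symm (Φ β f)]
    refine (congrArg (castE 𝕜 E (hp ((G.d_star α).trans hcax)))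
      (P1 β f (A.act (G.star α) x) hcb)).trans ?_
    exact aux_castE_castE _ _ _
  · -- adjoint relation
    intro α f g
    obtain ⟨v, hv⟩ := g
    refine Submodule.span_induction
      (p := fun v hv =>
        ⟪((Φ α f) : (R (G.c α)).carrier), v⟫_𝕜 =
          ⟪(f : (R (G.d α)).carrier),
            ((castD A p K (G.c_star α)
              (Φ (G.star α) (castD A p K (G.d_star α).symm ⟨v, hv⟩))) :
                (R (G.d α)).carrier)⟫_𝕜) ?_ ?_ ?_ ?_ hv
    · intro v hvm
      obtain ⟨x', hx'⟩ := Set.mem_iUnion.mp hvm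
      obtain ⟨k, rfl⟩ := hx'
      have hx6 : G.d (G.star α) = A.a x'.1 := (G.d_star α).trans x'.2.symm
      have e1 : castD A p K (G.d_star α).symm
          (⟨(R (G.c α)).Kx x' k, Submodule.subset_span hvm⟩ :
            ↥(Dspan A p K R (G.c α))) =
          ⟨(R (G.d (G.star α))).Kx ⟨x'.1, x'.2.trans (G.d_star α).symm⟩ k,
            Submodule.subset_span
              (Set.mem_iUnion.mpr ⟨_, Set.mem_range_self _⟩)⟩ :=
        aux_castD_Kx (G.d_star α).symm x'.1 x'.2 k _ _
      have e2 := P2 (G.star α) x'.1 hx6 k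
      have e3 : castD A p K (G.c_star α)
          (⟨(R (G.c (G.star α))).Kx ⟨A.act (G.star α) x'.1, A.a_act hx6⟩
              ((castE 𝕜 E (hp hx6)).symm k),
            Submodule.subset_span
              (Set.mem_iUnion.mpr ⟨⟨A.act (G.star α) x'.1, A.a_act hx6⟩,
                Set.mem_range_self _⟩)⟩ : ↥(Dspan A p K R (G.c (G.star α)))) =
          ⟨(R (G.d α)).Kx ⟨A.act (G.star α) x'.1,
              (A.a_act hx6).trans (G.c_star α)⟩
            ((castE 𝕜 E (hp hx6)).symm k),
            Submodule.subset_span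
              (Set.mem_iUnion.mpr ⟨_, Set.mem_range_self _⟩)⟩ :=
        aux_castD_Kx (G.c_star α) (A.act (G.star α) x'.1) (A.a_act hx6) _ _ _
      have etot : castD A p K (G.c_star α)
          (Φ (G.star α) (castD A p K (G.d_star α).symm
            (⟨(R (G.c α)).Kx x' k, Submodule.subset_span hvm⟩ :
              ↥(Dspan A p K R (G.c α))))) =
          ⟨(R (G.d α)).Kx ⟨A.act (G.star α) x'.1,
              (A.a_act hx6).trans (G.c_star α)⟩
            ((castE 𝕜 E (hp hx6)).symm k),
            Submodule.subset_span
              (Set.mem_iUnion.mpr ⟨_, Set.mem_range_self _⟩)⟩ :=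
        (congrArg (fun t => castD A p K (G.c_star α) (Φ (G.star α) t)) e1).trans
          ((congrArg (castD A p K (G.c_star α)) e2).trans e3)
      calc ⟪((Φ α f) : (R (G.c α)).carrier), (R (G.c α)).Kx x' k⟫_𝕜
          = ⟪(R (G.c α)).emb ↑(Φ α f) x', k⟫_𝕜 :=
            ((R (G.c α)).repro _ x' k).symm
        _ = ⟪castE 𝕜 E (hp hx6)
              ((R (G.d α)).emb ↑f ⟨A.act (G.star α) x'.1,
                (A.a_act hx6).trans (G.c_star α)⟩), k⟫_𝕜 :=
            congrArg (fun w => (⟪w, k⟫_𝕜 : 𝕜)) (P1 α f x'.1 x'.2.symm)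
        _ = ⟪(R (G.d α)).emb ↑f ⟨A.act (G.star α) x'.1,
                (A.a_act hx6).trans (G.c_star α)⟩,
              (castE 𝕜 E (hp hx6)).symm k⟫_𝕜 := aux_inner_castE _ _ _
        _ = ⟪(f : (R (G.d α)).carrier),
              (R (G.d α)).Kx ⟨A.act (G.star α) x'.1,
                (A.a_act hx6).trans (G.c_star α)⟩
                ((castE 𝕜 E (hp hx6)).symm k)⟫_𝕜 :=
            (R (G.d α)).repro _ _ _
        _ = _ := (congrArg (fun w : ↥(Dspan A p K R (G.d α)) =>
            (⟪(f : (R (G.d α)).carrier), (w : (R (G.d α)).carrier)⟫_𝕜 : 𝕜))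
            etot).symm
    · show ⟪((Φ α f) : (R (G.c α)).carrier), (0 : (R (G.c α)).carrier)⟫_𝕜 =
        ⟪(f : (R (G.d α)).carrier),
          ((castD A p K (G.c_star α) (Φ (G.star α)
            (castD A p K (G.d_star α).symm
              (0 : ↥(Dspan A p K R (G.c α)))))) : (R (G.d α)).carrier)⟫_𝕜
      rw [map_zero, map_zero, map_zero]
      simp
    · intro u v hu hv ihu ihv
      show ⟪((Φ α f) : (R (G.c α)).carrier), u + v⟫_𝕜 =
        ⟪(f : (R (G.d α)).carrier),
          ((castD A p K (G.c_star α) (Φ (G.star α)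
            (castD A p K (G.d_star α).symm (⟨u, hu⟩ + ⟨v, hv⟩)))) :
              (R (G.d α)).carrier)⟫_𝕜
      rw [map_add, map_add, map_add, Submodule.coe_add, inner_add_right,
        inner_add_right, ihu, ihv]
    · intro c u hu ihu
      show ⟪((Φ α f) : (R (G.c α)).carrier), c • u⟫_𝕜 =
        ⟪(f : (R (G.d α)).carrier),
          ((castD A p K (G.c_star α) (Φ (G.star α)
            (castD A p K (G.d_star α).symm (c • ⟨u, hu⟩)))) :
              (R (G.d α)).carrier)⟫_𝕜
      rw [map_smul, map_smul, map_smul, SetLike.val_smul, inner_smul_right,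
        inner_smul_right, ihu]
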